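/- Let C* : [0,1]^d → [0,1] be a copula satisfying the Fréchet bounds Π_j u_j ≤ C*(u) ≤ min_j u_j, and let α_{l,k,j} ≥ 0 with Σ_l Σ_k α_{l,k,j} = 1 for each j. Then the infinite product Ĉ(u) = Π_l Π_k C*(u_1^{α_{l,k,1}},...,u_d^{α_{l,k,d}}) converges to a value in (0,1] for every u ∈ (0,1]^d, and satisfies Ĉ(u) ≥ Π_{j=1}^d u_j. -/

import Mathlib

/-- The infinite product `Ĉ(u) = ∏_{l,k} C*(u^{α_{l,k,·}})` (defined via `exp` of the sum
of logs) converges, takes values in `(0,1]`, and dominates `∏_j u_j`. -/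
theorem stmt3 (d : ℕ) (hd : 1 ≤ d) (Cstar : (Fin d → ℝ) → ℝ)
    (hlow : ∀ u : Fin d → ℝ, (∀ j, 0 ≤ u j ∧ u j ≤ 1) → (∏ j, u j) ≤ Cstar u)
    (hupp : ∀ u : Fin d → ℝ, (∀ j, 0 ≤ u j ∧ u j ≤ 1) → ∀ j, Cstar u ≤ u j)
    (α : ℕ → ℤ → Fin d → ℝ) (hα : ∀ l k j, 0 ≤ α l k j)
    (hsummable : ∀ j, Summable (fun p : ℕ × ℤ => α p.1 p.2 j))
    (hsum : ∀ j, ∑' p : ℕ × ℤ, α p.1 p.2 j = 1)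
    (u : Fin d → ℝ) (hu : ∀ j, 0 < u j ∧ u j ≤ 1) :
    Summable (fun p : ℕ × ℤ => Real.log (Cstar (fun j => u j ^ α p.1 p.2 j))) ∧
      0 < Real.exp (∑' p : ℕ × ℤ, Real.log (Cstar (fun j => u j ^ α p.1 p.2 j))) ∧
      Real.exp (∑' p : ℕ × ℤ, Real.log (Cstar (fun j => u j ^ α p.1 p.2 j))) ≤ 1 ∧
      (∏ j, u j) ≤
        Real.exp (∑' p : ℕ × ℤ, Real.log (Cstar (fun j => u j ^ α p.1 p.2 j))) := by
  set v : ℕ × ℤ → Fin d → ℝ := fun p j => u j ^ α p.1 p.2 j with hv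
  have hvmem : ∀ p j, 0 < v p j ∧ v p j ≤ 1 := by
    intro p j
    exact ⟨Real.rpow_pos_of_pos (hu j).1 _,
      Real.rpow_le_one (hu j).1.le (hu j).2 (hα _ _ _)⟩
  have hvmem' : ∀ p, ∀ j, 0 ≤ v p j ∧ v p j ≤ 1 := fun p j =>
    ⟨(hvmem p j).1.le, (hvmem p j).2⟩
  have hprodpos : ∀ p : ℕ × ℤ, 0 < ∏ j, v p j := fun p =>
    Finset.prod_pos fun j _ => (hvmem p j).1
  have hCpos : ∀ p, 0 < Cstar (v p) := fun p =>
    lt_of_lt_of_le (hprodpos p) (hlow _ (hvmem' p))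
  have hCle1 : ∀ p, Cstar (v p) ≤ 1 := fun p =>
    le_trans (hupp _ (hvmem' p) ⟨0, hd⟩) (hvmem p ⟨0, hd⟩).2
  set f : ℕ × ℤ → ℝ := fun p => Real.log (Cstar (v p)) with hf
  have hfle0 : ∀ p, f p ≤ 0 := fun p => Real.log_nonpos (hCpos p).le (hCle1 p)
  set g : ℕ × ℤ → ℝ := fun p => ∑ j, α p.1 p.2 j * (-Real.log (u j)) with hg
  have hlb : ∀ p, -g p ≤ f p := by
    intro p
    have h1 : Real.log (∏ j, v p j) ≤ f p :=
      Real.log_le_log (hprodpos p) (hlow _ (hvmem' p))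
    have h2 : Real.log (∏ j, v p j) = ∑ j, α p.1 p.2 j * Real.log (u j) := by
      rw [Real.log_prod (fun j _ => (hvmem p j).1.ne')]
      exact Finset.sum_congr rfl fun j _ => Real.log_rpow (hu j).1 _
    have : -g p = ∑ j, α p.1 p.2 j * Real.log (u j) := by
      rw [hg, ← Finset.sum_neg_distrib]
      exact Finset.sum_congr rfl fun j _ => by ring
    rw [this, ← h2]; exact h1
  have hgsummable : Summable g :=
    summable_sum fun j _ => (hsummable j).mul_right _
  have hnegf : Summable fun p => -f p := by
    apply Summable.of_nonneg_of_le (fun p => neg_nonneg.2 (hfle0 p))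
      (fun p => by linarith [hlb p]) hgsummable
  have hfsummable : Summable f := by
    simpa using hnegf.neg
  refine ⟨hfsummable, Real.exp_pos _, ?_, ?_⟩
  · rw [Real.exp_le_one_iff]
    exact tsum_nonpos hfle0
  · have htg : ∑' p, g p = ∑ j, -Real.log (u j) := by
      rw [hg, Summable.tsum_finsetSum (fun j _ => (hsummable j).mul_right _)]
      refine Finset.sum_congr rfl fun j _ => ?_
      rw [tsum_mul_right, hsum j, one_mul]
    have h3 : ∑' p, -f p ≤ ∑' p, g p :=
      Summable.tsum_le_tsum (fun p => by linarith [hlb p]) hnegf hgsummable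
    have h4 : -(∑ j, -Real.log (u j)) ≤ ∑' p, f p := by
      rw [tsum_neg] at h3; linarith [htg ▸ h3]
    have h5 : -(∑ j, -Real.log (u j)) = Real.log (∏ j, u j) := by
      rw [Real.log_prod (fun j _ => (hu j).1.ne')]
      simp
    calc (∏ j, u j) = Real.exp (Real.log (∏ j, u j)) :=
          (Real.exp_log (Finset.prod_pos fun j _ => (hu j).1)).symm
      _ ≤ _ := Real.exp_le_exp.2 (h5 ▸ h4)
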